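/- Let t : Fin n → k and let D : A → A be a k-linear map satisfying the graded Leibniz rule with D(x_i) = x_i * w_t for all i ∈ Fin n. Let M be an invertible n×n matrix over k and let f : A →ₐ[k] A be the k-algebra endomorphism determined by f(x_i) = ∑_{j} M i j • x_j for all i. Then f ∘ D = D ∘ f if and only if ∑_{j} t j * M j s = t s for all s ∈ Fin n. -/

import Mathlib

open MvPolynomial

/-- For an invertible matrix `M` and the algebra endomorphism `f` of
`k[x_1,…,x_n]` determined by `f (X i) = ∑ j, M i j • X j`, `f` commutes with the
differential `D` of `A(t)` if and only if `∑ j, t j * M j s = t s` for all `s`. -/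
theorem stmt_4 (k : Type*) [Field k] [CharZero k] (n : ℕ) (t : Fin n → k)
    (D : MvPolynomial (Fin n) k →ₗ[k] MvPolynomial (Fin n) k)
    (hLeib : ∀ (d : ℕ) (a b : MvPolynomial (Fin n) k), a.IsHomogeneous d →
      D (a * b) = D a * b + ((-1 : k) ^ d) • (a * D b))
    (hD : ∀ i : Fin n, D (X i) = X i * ∑ j : Fin n, t j • X j)
    (M : Matrix (Fin n) (Fin n) k) (hM : IsUnit M)
    (f : MvPolynomial (Fin n) k →ₐ[k] MvPolynomial (Fin n) k)
    (hf : ∀ i : Fin n, f (X i) = ∑ j : Fin n, M i j • X j) :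
    (∀ a : MvPolynomial (Fin n) k, f (D a) = D (f a)) ↔
    (∀ s : Fin n, ∑ j : Fin n, t j * M j s = t s) := by
  set w : MvPolynomial (Fin n) k := ∑ j : Fin n, t j • X j with hw
  -- D kills constants
  have hD1 : D 1 = 0 := by
    have h := hLeib 0 1 1 (isHomogeneous_one _ _)
    simp only [mul_one, one_mul, pow_zero, one_smul] at h
    exact (left_eq_add.mp h)
  -- coefficient of X s in a linear combination of the variables
  have hcoeff : ∀ (c : Fin n → k) (s : Fin n),
      coeff (Finsupp.single s 1) (∑ j : Fin n, c j • X j) = c s := by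
    intro c s
    rw [coeff_sum]
    rw [Finset.sum_eq_single s]
    · simp [coeff_smul, coeff_X]
    · intro j _ hj
      rw [coeff_smul, coeff_X', if_neg, smul_zero]
      simpa [Finsupp.single_left_inj (one_ne_zero (α := ℕ))] using hj
    · simp
  -- value of D on monomials
  have hmono : ∀ (d : ℕ) (m : Fin n →₀ ℕ), m.degree = d →
      D (monomial m 1) = if Odd d then monomial m 1 * w else 0 := by
    intro d
    induction d with
    | zero =>
      intro m hm
      have : m = 0 := (Finsupp.degree_eq_zero_iff m).mp hm
      subst this
      simpa [monomial_zero'] using hD1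
    | succ d ih =>
      intro m hm
      have hne : m ≠ 0 := by
        intro h
        rw [h, map_zero] at hm
        omega
      obtain ⟨i, hi⟩ : ∃ i, m i ≠ 0 := by
        by_contra h
        push_neg at h
        exact hne (Finsupp.ext fun j => h j)
      set m' : Fin n →₀ ℕ := m - Finsupp.single i 1 with hm'def
      have hmi : m = Finsupp.single i 1 + m' := by
        ext j
        simp only [hm'def, Finsupp.add_apply, Finsupp.tsub_apply, Finsupp.single_apply]
        by_cases hj : i = j
        · subst hj; rw [if_pos rfl]; omega
        · simp [hj]
      have hdeg' : m'.degree = d := by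
        have h1 : m.degree = (Finsupp.single i 1).degree + m'.degree := by
          rw [hmi]
          simp only [Finsupp.degree_eq_weight_one]
          exact map_add _ _ _
        have h2 : (Finsupp.single i 1).degree = 1 := by
          exact Finsupp.degree_single i 1
        omega
      have hX : (monomial m (1 : k)) = X i * monomial m' 1 := by
        rw [hmi, X, monomial_mul, one_mul]
      rw [hX, hLeib 1 (X i) _ (isHomogeneous_X _ _), hD i, ih m' hdeg']
      rcases Nat.even_or_odd d with he | ho
      · rw [if_neg (by simpa using he), if_pos (by simpa using Even.add_one he)]
        simp only [mul_zero, smul_zero, add_zero, pow_one, neg_smul, one_smul]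
        ring
      · rw [if_pos ho, if_neg (by simp [Nat.even_add_one, ho, Nat.not_even_iff_odd.mpr ho])]
        simp only [pow_one, neg_smul, one_smul]
        ring
  -- value of D on homogeneous polynomials
  have hhom : ∀ (d : ℕ) (a : MvPolynomial (Fin n) k), a.IsHomogeneous d →
      D a = if Odd d then a * w else 0 := by
    intro d a ha
    conv_lhs => rw [a.as_sum]
    rw [map_sum]
    have hterm : ∀ v ∈ a.support,
        D (monomial v (coeff v a)) = if Odd d then monomial v (coeff v a) * w else 0 := by
      intro v hv
      have hv' : v.degree = d := by
        by_contra h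
        exact (mem_support_iff.mp hv) (ha.coeff_eq_zero h)
      have hsm : (monomial v (coeff v a)) = coeff v a • monomial v (1 : k) := by
        rw [smul_monomial, smul_eq_mul, mul_one]
      rw [hsm, map_smul, hmono d v hv', smul_ite, smul_zero, smul_mul_assoc]
    rw [Finset.sum_congr rfl hterm]
    split
    · rw [← Finset.sum_mul, ← a.as_sum]
    · simp
  -- computing f w
  have hfw : f w = ∑ s : Fin n, (∑ j : Fin n, t j * M j s) • X s := by
    rw [hw, map_sum]
    simp_rw [map_smul, hf, Finset.smul_sum, smul_smul]
    rw [Finset.sum_comm]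
    simp_rw [← Finset.sum_smul]
  -- f (X i) is homogeneous of degree 1 and f preserves homogeneity
  have hfX : ∀ i : Fin n, (f (X i)).IsHomogeneous 1 := by
    intro i
    rw [hf i]
    apply IsHomogeneous.sum
    intro j _
    rw [smul_eq_C_mul]
    exact isHomogeneous_C_mul_X _ _
  have hfhom : ∀ (d : ℕ) (a : MvPolynomial (Fin n) k), a.IsHomogeneous d →
      (f a).IsHomogeneous d := by
    intro d a ha
    have h1 : f a = aeval (f ∘ X) a := by rw [← aeval_unique]
    rw [h1]
    simpa using ha.aeval (f ∘ X) (n := 1) (fun i => hfX i)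
  constructor
  · -- forward
    intro hcomm s
    -- f (X s) ≠ 0
    obtain ⟨u, hu⟩ := hM
    have hMN : M * (↑u⁻¹ : Matrix (Fin n) (Fin n) k) = 1 := by
      rw [← hu, ← Units.val_mul, mul_inv_cancel, Units.val_one]
    have hrow : ∃ j, M s j ≠ 0 := by
      by_contra h
      push_neg at h
      have h1 : (M * (↑u⁻¹ : Matrix (Fin n) (Fin n) k)) s s = 1 := by
        rw [hMN, Matrix.one_apply_eq]
      rw [Matrix.mul_apply] at h1
      simp [h] at h1
    obtain ⟨j, hj⟩ := hrow
    have hfXs : f (X s) ≠ 0 := by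
      intro h
      apply hj
      have := hcoeff (M s) j
      rw [← hf s, h] at this
      simpa using this.symm
    have h1 := hcomm (X s)
    rw [hD s, map_mul, hhom 1 (f (X s)) (hfX s)] at h1
    rw [if_pos (by norm_num)] at h1
    have hfww : f w = w := mul_left_cancel₀ hfXs h1
    have := hcoeff t s
    rw [← hw, ← hfww, hfw, hcoeff] at this
    exact this
  · -- backward
    intro hsum
    have hfww : f w = w := by
      rw [hfw, hw]
      exact Finset.sum_congr rfl fun s _ => by rw [hsum s]
    have key : ∀ (d : ℕ) (a : MvPolynomial (Fin n) k), a.IsHomogeneous d →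
        f (D a) = D (f a) := by
      intro d a ha
      rw [hhom d a ha, hhom d (f a) (hfhom d a ha)]
      split
      · rw [map_mul, hfww]
      · simp
    intro a
    conv_lhs => rw [← a.sum_homogeneousComponent]
    conv_rhs => rw [← a.sum_homogeneousComponent]
    rw [map_sum, map_sum, map_sum, map_sum]
    exact Finset.sum_congr rfl fun i _ =>
      key i _ (homogeneousComponent_isHomogeneous i a)
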